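/- For each i ∈ I₁, let f^(S) : [0,1]² → ℝ, S ∈ {L,R}, be given by f^(S)(ξ₁,ξ₂) := α^(S)(ξ₂)N_i^{p−1,r}(ξ₂)N₁^{p,r}(ξ₁). Then: (a) f^(L)(0,ξ₂) = f^(R)(0,ξ₂) = 0 for all ξ₂ ∈ [0,1], so the patchwise prescriptions φ_{Γ₁,i} ∘ F^(S) = f^(S) define a single function φ_{Γ₁,i} on Ω vanishing on Γ; (b) α^(R)(ξ₂)∂₁f^(L)(0,ξ₂) − α^(L)(ξ₂)∂₁f^(R)(0,ξ₂) + β(ξ₂)∂₂f^(L)(0,ξ₂) = 0 for all ξ₂ ∈ [0,1]; (c) consequently the gradients of the two patchwise pieces agree along the interface: (J_{F^(L)}(0,ξ₂))^{−T} ∇f^(L)(0,ξ₂) = (J_{F^(R)}(0,ξ₂))^{−T} ∇f^(R)(0,ξ₂) for all ξ₂ ∈ [0,1], where J_{F^(S)} denotes the Jacobian matrix of F^(S). -/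

import Mathlib

noncomputable section
open Set

namespace TwoPatch



/-- Cox–de Boor recursion for B-splines over the knot sequence `t`.  Degree-`0`
B-splines are the characteristic functions of `[t i, t (i+1))`, closed at the
right endpoint when `t (i+1) = 1` (the right end of the parametric domain),
and the usual convention `0/0 = 0` is used in the recursion. -/
def coxDeBoor (t : ℕ → ℝ) : ℕ → ℕ → ℝ → ℝ
  | 0, i, x =>
      if (t i ≤ x ∧ x < t (i + 1)) ∨ (t i < t (i + 1) ∧ t (i + 1) = 1 ∧ x = 1) then 1 else 0
  | (d + 1), i, x =>
      (if t (i + d + 1) = t i then 0 else (x - t i) / (t (i + d + 1) - t i)) *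
          coxDeBoor t d i x +
        (if t (i + d + 2) = t (i + 1) then 0
          else (t (i + d + 2) - x) / (t (i + d + 2) - t (i + 1))) *
          coxDeBoor t d (i + 1) x

/-- The open knot vector on `[0,1]` of degree `dg`:  `0` and `1` appear with
multiplicity `dg + 1` and each of the `k` inner breakpoints `τ 0 < … < τ (k-1)`
appears with multiplicity `m`. -/
def openKnots (dg m k : ℕ) (τ : ℕ → ℝ) (j : ℕ) : ℝ :=
  if j ≤ dg then 0 else if dg + k * m < j then 1 else τ ((j - (dg + 1)) / m)

/-- The `i`-th B-spline of degree `dg`, inner-knot multiplicity `m`, over the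
breakpoints `τ 0, …, τ (k-1)`. -/
def Bspl (dg m k : ℕ) (τ : ℕ → ℝ) (i : ℕ) : ℝ → ℝ :=
  coxDeBoor (openKnots dg m k τ) dg i

/-- The dimension of the corresponding spline space. -/
def sdim (dg m k : ℕ) : ℕ := dg + 1 + k * m

/-- The univariate spline space, as a subspace of `ℝ → ℝ`. -/
def splineSpace (dg m k : ℕ) (τ : ℕ → ℝ) : Submodule ℝ (ℝ → ℝ) :=
  Submodule.span ℝ (Bspl dg m k τ '' Set.Iio (sdim dg m k))

/-- The tensor-product spline space `span {g(ξ₁)h(ξ₂) : g, h ∈ S}`. -/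
def tensorSpace (dg m k : ℕ) (τ : ℕ → ℝ) : Submodule ℝ (ℝ × ℝ → ℝ) :=
  Submodule.span ℝ
    {f | ∃ g ∈ splineSpace dg m k τ, ∃ h ∈ splineSpace dg m k τ,
        f = fun q : ℝ × ℝ => g q.1 * h q.2}

/-- The parametric interval `[0,1]`. -/
def I01 : Set ℝ := Set.Icc 0 1

/-- The parametric square `[0,1]²`. -/
def sq : Set (ℝ × ℝ) := Set.Icc (0, 0) (1, 1)

/-- Derivative of a univariate function within `[0,1]` (one-sided at the endpoints). -/
def d01 (g : ℝ → ℝ) (x : ℝ) : ℝ := derivWithin g I01 x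

/-- First partial derivative (within `[0,1]` in the first variable). -/
def pd1 (f : ℝ × ℝ → ℝ) (q : ℝ × ℝ) : ℝ := derivWithin (fun s => f (s, q.2)) I01 q.1

/-- Second partial derivative (within `[0,1]` in the second variable). -/
def pd2 (f : ℝ × ℝ → ℝ) (q : ℝ × ℝ) : ℝ := derivWithin (fun s => f (q.1, s)) I01 q.2

/-- First partial derivative of a map into `ℝ²`. -/
def pd1v (F : ℝ × ℝ → ℝ × ℝ) (q : ℝ × ℝ) : ℝ × ℝ :=
  (pd1 (fun x => (F x).1) q, pd1 (fun x => (F x).2) q)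

/-- Second partial derivative of a map into `ℝ²`. -/
def pd2v (F : ℝ × ℝ → ℝ × ℝ) (q : ℝ × ℝ) : ℝ × ℝ :=
  (pd2 (fun x => (F x).1) q, pd2 (fun x => (F x).2) q)

/-- Jacobian determinant. -/
def jacDet (F : ℝ × ℝ → ℝ × ℝ) (q : ℝ × ℝ) : ℝ :=
  pd1 (fun x => (F x).1) q * pd2 (fun x => (F x).2) q -
    pd1 (fun x => (F x).2) q * pd2 (fun x => (F x).1) q

/-- The Jacobian matrix. -/
def jacMat (F : ℝ × ℝ → ℝ × ℝ) (q : ℝ × ℝ) : Matrix (Fin 2) (Fin 2) ℝ :=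
  !![pd1 (fun x => (F x).1) q, pd2 (fun x => (F x).1) q;
     pd1 (fun x => (F x).2) q, pd2 (fun x => (F x).2) q]

/-- Polynomials of degree at most one ("linear functions"). -/
def IsLinearPoly (a : ℝ → ℝ) : Prop := ∃ c₀ c₁ : ℝ, a = fun x => c₀ + c₁ * x

/-- Breakpoints extended by the endpoints `0` and `1`. -/
def extBpt (k : ℕ) (τ : ℕ → ℝ) (i : ℕ) : ℝ :=
  if i = 0 then 0 else if i ≤ k then τ (i - 1) else 1

/-- One dyadic refinement of the breakpoint set `τ 0 < … < τ (k-1)`: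
the old breakpoints together with the midpoints of the `k+1` intervals
determined by `{0} ∪ T ∪ {1}`. -/
def dyadicOnce (k : ℕ) (τ : ℕ → ℝ) (j : ℕ) : ℝ :=
  if j % 2 = 1 then τ (j / 2) else (extBpt k τ (j / 2) + extBpt k τ (j / 2 + 1)) / 2

/-- Number of breakpoints at level `ℓ`. -/
def levelK (k : ℕ) : ℕ → ℕ
  | 0 => k
  | ℓ + 1 => 2 * levelK k ℓ + 1

/-- Breakpoints at level `ℓ` (iterated dyadic refinement). -/
def levelτ (k : ℕ) (τ : ℕ → ℝ) : ℕ → ℕ → ℝ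
  | 0 => τ
  | ℓ + 1 => dyadicOnce (levelK k ℓ) (levelτ k τ ℓ)

/-- Pullback of the interior basis functions: `N_i^{p,r}(ξ₁) N_j^{p,r}(ξ₂)`. -/
def fOmega (p r k : ℕ) (τ : ℕ → ℝ) (i j : ℕ) (q : ℝ × ℝ) : ℝ :=
  Bspl p (p - r) k τ i q.1 * Bspl p (p - r) k τ j q.2

/-- Pullback of the interface basis function `φ_{Γ₀,i}` on the patch with
gluing datum `βS`. -/
def fGamma0 (p r k : ℕ) (τ : ℕ → ℝ) (βS : ℝ → ℝ) (i : ℕ) (q : ℝ × ℝ) : ℝ :=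
  Bspl p (p - r - 1) k τ i q.2 *
      (Bspl p (p - r) k τ 0 q.1 + Bspl p (p - r) k τ 1 q.1) +
    βS q.2 * d01 (Bspl p (p - r - 1) k τ i) q.2 * (τ 0 / (p : ℝ)) * Bspl p (p - r) k τ 1 q.1

/-- Pullback of the interface basis function `φ_{Γ₁,i}` on the patch with
gluing datum `αS`. -/
def fGamma1 (p r k : ℕ) (τ : ℕ → ℝ) (αS : ℝ → ℝ) (i : ℕ) (q : ℝ × ℝ) : ℝ :=
  αS q.2 * Bspl (p - 1) (p - r - 1) k τ i q.2 * Bspl p (p - r) k τ 1 q.1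

/-- Support of a function on the domain `Ω`. -/
def suppOn (Ω : Set (ℝ × ℝ)) (φ : ℝ × ℝ → ℝ) : Set (ℝ × ℝ) :=
  closure {x | x ∈ Ω ∧ φ x ≠ 0}

/-- An analysis-suitable `G¹` two-patch geometry, on the spline space of degree
`p`, regularity `r`, with `k` inner breakpoints `τ 0 < … < τ (k-1)`.  The two
geometry mappings `FL` and `FR` are regular spline parameterizations of the two
patches, and `αL, αR, βL, βR` are the linear gluing data. -/
structure ASG1 where
  p : ℕ
  r : ℕ
  k : ℕ
  τ : ℕ → ℝ
  hp : 3 ≤ p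
  hr : 1 ≤ r
  hrp : r ≤ p - 2
  hτpos : ∀ i < k, 0 < τ i
  hτlt : ∀ i < k, τ i < 1
  hτmono : ∀ i, i + 1 < k → τ i < τ (i + 1)
  /-- left geometry mapping -/
  FL : ℝ × ℝ → ℝ × ℝ
  /-- right geometry mapping -/
  FR : ℝ × ℝ → ℝ × ℝ
  hFL1 : (fun q => (FL q).1) ∈ tensorSpace p (p - r) k τ
  hFL2 : (fun q => (FL q).2) ∈ tensorSpace p (p - r) k τ
  hFR1 : (fun q => (FR q).1) ∈ tensorSpace p (p - r) k τ
  hFR2 : (fun q => (FR q).2) ∈ tensorSpace p (p - r) k τ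
  hFLc1 : ContDiffOn ℝ 1 FL sq
  hFRc1 : ContDiffOn ℝ 1 FR sq
  hFLinj : Set.InjOn FL sq
  hFRinj : Set.InjOn FR sq
  hFLjac : ∀ q ∈ sq, jacDet FL q ≠ 0
  hFRjac : ∀ q ∈ sq, jacDet FR q ≠ 0
  /-- the two patches share the interface `ξ₁ = 0` -/
  hIface : ∀ ξ ∈ I01, FL (0, ξ) = FR (0, ξ)
  /-- the patches intersect exactly in the common interface -/
  hGamma : FL '' sq ∩ FR '' sq = (fun ξ : ℝ => FL (0, ξ)) '' I01
  /-- gluing data -/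
  αL : ℝ → ℝ
  αR : ℝ → ℝ
  βL : ℝ → ℝ
  βR : ℝ → ℝ
  hαLlin : IsLinearPoly αL
  hαRlin : IsLinearPoly αR
  hβLlin : IsLinearPoly βL
  hβRlin : IsLinearPoly βR
  hαneg : ∀ ξ ∈ I01, αL ξ * αR ξ < 0
  /-- the analysis-suitable `G¹` condition -/
  hG1 : ∀ ξ ∈ I01,
      αR ξ • pd1v FL (0, ξ) - αL ξ • pd1v FR (0, ξ) +
          (αL ξ * βR ξ - αR ξ * βL ξ) • pd2v FL (0, ξ) = 0

/-- The function `β = α^(L) β^(R) − α^(R) β^(L)`. -/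
def ASG1.beta (G : ASG1) : ℝ → ℝ := fun ξ => G.αL ξ * G.βR ξ - G.αR ξ * G.βL ξ

/-- The left patch `Ω^(L)`. -/
def ASG1.ΩL (G : ASG1) : Set (ℝ × ℝ) := G.FL '' sq

/-- The right patch `Ω^(R)`. -/
def ASG1.ΩR (G : ASG1) : Set (ℝ × ℝ) := G.FR '' sq

/-- The two-patch domain `Ω = Ω^(L) ∪ Ω^(R)`. -/
def ASG1.dom (G : ASG1) : Set (ℝ × ℝ) := G.ΩL ∪ G.ΩR

/-- The interface `Γ`. -/
def ASG1.iface (G : ASG1) : Set (ℝ × ℝ) := (fun ξ : ℝ => G.FL (0, ξ)) '' I01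

-- The function on `Ω` whose pullbacks to the two patches are `fL` and `fR`
-- (extended by `0` outside `Ω`).
open Classical in
def ASG1.glue (G : ASG1) (fL fR : ℝ × ℝ → ℝ) (x : ℝ × ℝ) : ℝ :=
  if x ∈ G.ΩL then fL (Function.invFunOn G.FL sq x)
  else if x ∈ G.ΩR then fR (Function.invFunOn G.FR sq x)
  else 0

/-- Indices for the basis `Φ` of the `C¹` space `W`. -/
inductive PhiIdx where
  | inL (i j : ℕ) : PhiIdx
  | inR (i j : ℕ) : PhiIdx
  | g0 (i : ℕ) : PhiIdx
  | g1 (i : ℕ) : PhiIdx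

/-- The valid index ranges for the basis `Φ` (for degree `p`, regularity `r`,
`k` inner breakpoints). -/
def PhiIdx.valid (p r k : ℕ) : PhiIdx → Prop
  | .inL i j => 2 ≤ i ∧ i < sdim p (p - r) k ∧ j < sdim p (p - r) k
  | .inR i j => 2 ≤ i ∧ i < sdim p (p - r) k ∧ j < sdim p (p - r) k
  | .g0 i => i < sdim p (p - r - 1) k
  | .g1 i => i < sdim (p - 1) (p - r - 1) k

/-- The basis functions of the `C¹` space `W`, for breakpoints `τ' 0 < … < τ' (k'-1)`. -/
def ASG1.phiAt (G : ASG1) (k' : ℕ) (τ' : ℕ → ℝ) : PhiIdx → ℝ × ℝ → ℝ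
  | .inL i j => G.glue (fOmega G.p G.r k' τ' i j) (fun _ => 0)
  | .inR i j => G.glue (fun _ => 0) (fOmega G.p G.r k' τ' i j)
  | .g0 i => G.glue (fGamma0 G.p G.r k' τ' G.βL i) (fGamma0 G.p G.r k' τ' G.βR i)
  | .g1 i => G.glue (fGamma1 G.p G.r k' τ' G.αL i) (fGamma1 G.p G.r k' τ' G.αR i)

/-- The level-`ℓ` basis functions. -/
def ASG1.phiLvl (G : ASG1) (ℓ : ℕ) : PhiIdx → ℝ × ℝ → ℝ :=
  G.phiAt (levelK G.k ℓ) (levelτ G.k G.τ ℓ)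

/-- The level-`ℓ` basis `Φ^ℓ`, as a set of functions on the two-patch domain. -/
def ASG1.PhiSetLvl (G : ASG1) (ℓ : ℕ) : Set (ℝ × ℝ → ℝ) :=
  G.phiLvl ℓ '' {e | e.valid G.p G.r (levelK G.k ℓ)}

/-- The basis `Φ` (level `0`). -/
def ASG1.PhiSet (G : ASG1) : Set (ℝ × ℝ → ℝ) := G.PhiSetLvl 0

/-! ### Auxiliary lemmas -/

lemma uniqueDiffOn_I01 : UniqueDiffOn ℝ I01 := uniqueDiffOn_Icc one_pos

/-- Unconditional constant-multiple rule for `derivWithin` on `I01`. -/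
lemma derivWithin_cmul (c : ℝ) (f : ℝ → ℝ) {x : ℝ} (hx : x ∈ I01) :
    derivWithin (fun y => c * f y) I01 x = c * derivWithin f I01 x := by
  by_cases hf : DifferentiableWithinAt ℝ f I01 x
  · exact derivWithin_const_mul c hf
  · rcases eq_or_ne c 0 with rfl | hc
    · simp only [zero_mul]
      exact congrFun (derivWithin_fun_const _ _) x
    · rw [derivWithin_zero_of_not_differentiableWithinAt hf, mul_zero,
        derivWithin_zero_of_not_differentiableWithinAt]
      intro h
      have h2 := h.const_mul c⁻¹
      simp only [← mul_assoc, inv_mul_cancel₀ hc, one_mul] at h2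
      exact hf h2

/-- If the knots `t i, …, t (i+d-1)` all vanish and `t (i+d)` is positive,
then the corresponding Cox–de Boor B-spline vanishes at `0`. -/
lemma coxDeBoor_eq_zero_at_zero (t : ℕ → ℝ) :
    ∀ d i, (∀ j, i ≤ j → j < i + d → t j = 0) → 0 < t (i + d) →
      coxDeBoor t d i 0 = 0 := by
  intro d
  induction d with
  | zero =>
      intro i _ hpos
      rw [coxDeBoor]
      rw [if_neg]
      push_neg
      constructor
      · intro hle
        exact absurd hle (by rw [Nat.add_zero] at hpos; linarith)
      · intro _ _
        norm_num
  | succ d ih =>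
      intro i h hpos
      have hti : t i = 0 := h i le_rfl (by omega)
      have hrec : coxDeBoor t d (i + 1) 0 = 0 := by
        apply ih
        · intro j h1 h2
          exact h j (by omega) (by omega)
        · have : i + 1 + d = i + (d + 1) := by omega
          rw [this]; exact hpos
      rw [coxDeBoor]
      rw [hrec, mul_zero, add_zero]
      split
      · rw [zero_mul]
      · rw [hti, sub_zero, zero_div, zero_mul]

/-- The second B-spline `N₁^{p}` of the open knot vector vanishes at `0`. -/
lemma Bspl_one_at_zero (p m k : ℕ) (τ : ℕ → ℝ) (hτ : 0 < k → 0 < τ 0) :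
    Bspl p m k τ 1 0 = 0 := by
  apply coxDeBoor_eq_zero_at_zero
  · intro j h1 h2
    unfold openKnots
    rw [if_pos (by omega)]
  · show 0 < openKnots p m k τ (1 + p)
    unfold openKnots
    rw [if_neg (by omega)]
    by_cases hkm : p + k * m < 1 + p
    · rw [if_pos hkm]; norm_num
    · rw [if_neg hkm]
      have hkm' : 1 ≤ k * m := by omega
      have hk : 0 < k := by
        rcases Nat.eq_zero_or_pos k with rfl | h
        · simp at hkm'
        · exact h
      have h0 : 1 + p - (p + 1) = 0 := by omega
      rw [h0, Nat.zero_div]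
      exact hτ hk

lemma mem_sq_of_I01 {ξ : ℝ} (hξ : ξ ∈ I01) : ((0 : ℝ), ξ) ∈ sq := by
  constructor
  · exact ⟨le_rfl, hξ.1⟩
  · exact ⟨zero_le_one, hξ.2⟩

/-- For each `i ∈ I₁`, the patchwise prescriptions
`f^(S) = φ_{Γ₁,i} ∘ F^(S)` vanish along `ξ₁ = 0`, hence define a single
function `φ_{Γ₁,i}` on `Ω` vanishing on the interface `Γ`; they satisfy the
`G¹` gluing relation, and therefore the gradients of the two patchwise pieces
agree along the interface. -/
theorem gamma1_wellDefined_and_C1 (G : ASG1) (i : ℕ)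
    (hi : i < sdim (G.p - 1) (G.p - G.r - 1) G.k) :
    -- (a) both pullbacks vanish on the interface …
    (∀ ξ ∈ I01,
      fGamma1 G.p G.r G.k G.τ G.αL i (0, ξ) = 0 ∧
      fGamma1 G.p G.r G.k G.τ G.αR i (0, ξ) = 0) ∧
    -- … so they define a single function `φ_{Γ₁,i}` on `Ω`, vanishing on `Γ`,
    -- with `φ_{Γ₁,i} ∘ F^(S) = f^(S)` on `[0,1]²` for both patches
    (∀ q ∈ sq,
      G.glue (fGamma1 G.p G.r G.k G.τ G.αL i) (fGamma1 G.p G.r G.k G.τ G.αR i) (G.FL q) =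
        fGamma1 G.p G.r G.k G.τ G.αL i q) ∧
    (∀ q ∈ sq,
      G.glue (fGamma1 G.p G.r G.k G.τ G.αL i) (fGamma1 G.p G.r G.k G.τ G.αR i) (G.FR q) =
        fGamma1 G.p G.r G.k G.τ G.αR i q) ∧
    (∀ x ∈ G.iface,
      G.glue (fGamma1 G.p G.r G.k G.τ G.αL i) (fGamma1 G.p G.r G.k G.τ G.αR i) x = 0) ∧
    -- (b) the `G¹` gluing relation
    (∀ ξ ∈ I01,
      G.αR ξ * pd1 (fGamma1 G.p G.r G.k G.τ G.αL i) (0, ξ) -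
          G.αL ξ * pd1 (fGamma1 G.p G.r G.k G.τ G.αR i) (0, ξ) +
          G.beta ξ * pd2 (fGamma1 G.p G.r G.k G.τ G.αL i) (0, ξ) = 0) ∧
    -- (c) the gradients of the two patchwise pieces agree along the interface
    (∀ ξ ∈ I01,
      ((jacMat G.FL (0, ξ)).transpose)⁻¹.mulVec
          ![pd1 (fGamma1 G.p G.r G.k G.τ G.αL i) (0, ξ),
            pd2 (fGamma1 G.p G.r G.k G.τ G.αL i) (0, ξ)] =
        ((jacMat G.FR (0, ξ)).transpose)⁻¹.mulVec
          ![pd1 (fGamma1 G.p G.r G.k G.τ G.αR i) (0, ξ),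
            pd2 (fGamma1 G.p G.r G.k G.τ G.αR i) (0, ξ)]) := by
  -- the second B-spline vanishes at `0`
  have hN0 : Bspl G.p (G.p - G.r) G.k G.τ 1 0 = 0 :=
    Bspl_one_at_zero _ _ _ _ (fun hk => G.hτpos 0 hk)
  -- (a) both pullbacks vanish on the interface
  have hvan : ∀ (αS : ℝ → ℝ) (ξ : ℝ), fGamma1 G.p G.r G.k G.τ αS i (0, ξ) = 0 := by
    intro αS ξ
    simp [fGamma1, hN0]
  -- the partial derivatives along the interface
  have hpd2 : ∀ (αS : ℝ → ℝ), ∀ ξ ∈ I01,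
      pd2 (fGamma1 G.p G.r G.k G.τ αS i) (0, ξ) = 0 := by
    intro αS ξ hξ
    have : (fun s => fGamma1 G.p G.r G.k G.τ αS i (((0 : ℝ), ξ).1, s)) = fun _ => (0 : ℝ) := by
      funext s
      simp [fGamma1, hN0]
    rw [pd2, this]
    exact congrFun (derivWithin_fun_const _ _) ξ
  have hpd1 : ∀ (αS : ℝ → ℝ) (ξ : ℝ),
      pd1 (fGamma1 G.p G.r G.k G.τ αS i) (0, ξ) =
        αS ξ * Bspl (G.p - 1) (G.p - G.r - 1) G.k G.τ i ξ *
          d01 (Bspl G.p (G.p - G.r) G.k G.τ 1) 0 := by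
    intro αS ξ
    have h0 : (0 : ℝ) ∈ I01 := ⟨le_rfl, zero_le_one⟩
    have := derivWithin_cmul (αS ξ * Bspl (G.p - 1) (G.p - G.r - 1) G.k G.τ i ξ)
      (Bspl G.p (G.p - G.r) G.k G.τ 1) h0
    rw [pd1]
    simp only [fGamma1]
    exact this
  -- gluing claims
  have hgL : ∀ q ∈ sq,
      G.glue (fGamma1 G.p G.r G.k G.τ G.αL i) (fGamma1 G.p G.r G.k G.τ G.αR i) (G.FL q) =
        fGamma1 G.p G.r G.k G.τ G.αL i q := by
    intro q hq
    have hmem : G.FL q ∈ G.ΩL := ⟨q, hq, rfl⟩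
    rw [ASG1.glue, if_pos hmem, G.hFLinj.leftInvOn_invFunOn hq]
  have hgR : ∀ q ∈ sq,
      G.glue (fGamma1 G.p G.r G.k G.τ G.αL i) (fGamma1 G.p G.r G.k G.τ G.αR i) (G.FR q) =
        fGamma1 G.p G.r G.k G.τ G.αR i q := by
    intro q hq
    by_cases hL : G.FR q ∈ G.ΩL
    · obtain ⟨ξ, hξ, hFLξ0⟩ : G.FR q ∈ (fun ξ : ℝ => G.FL (0, ξ)) '' I01 := by
        rw [← G.hGamma]
        exact ⟨hL, ⟨q, hq, rfl⟩⟩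
      have hFLξ : G.FL (0, ξ) = G.FR q := hFLξ0
      have hsq' : ((0 : ℝ), ξ) ∈ sq := mem_sq_of_I01 hξ
      have hq0 : q = ((0 : ℝ), ξ) := by
        apply G.hFRinj hq hsq'
        rw [← hFLξ, G.hIface ξ hξ]
      rw [ASG1.glue, if_pos hL, ← hFLξ, G.hFLinj.leftInvOn_invFunOn hsq', hvan, hq0, hvan]
    · have hmem : G.FR q ∈ G.ΩR := ⟨q, hq, rfl⟩
      rw [ASG1.glue, if_neg hL, if_pos hmem, G.hFRinj.leftInvOn_invFunOn hq]
  have hgΓ : ∀ x ∈ G.iface,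
      G.glue (fGamma1 G.p G.r G.k G.τ G.αL i) (fGamma1 G.p G.r G.k G.τ G.αR i) x = 0 := by
    intro x hx
    obtain ⟨ξ, hξ, rfl⟩ := hx
    have hsq' : ((0 : ℝ), ξ) ∈ sq := mem_sq_of_I01 hξ
    rw [hgL _ hsq', hvan]
  refine ⟨fun ξ hξ => ⟨hvan _ ξ, hvan _ ξ⟩, hgL, hgR, hgΓ, ?_, ?_⟩
  · -- (b)
    intro ξ hξ
    rw [hpd1, hpd1, hpd2 _ ξ hξ]
    ring
  · -- (c)
    intro ξ hξ
    have hsq' : ((0 : ℝ), ξ) ∈ sq := mem_sq_of_I01 hξ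
    -- abbreviations
    set AL1 := pd1 (fun x => (G.FL x).1) (0, ξ) with hAL1
    set AL2 := pd1 (fun x => (G.FL x).2) (0, ξ) with hAL2
    set AR1 := pd1 (fun x => (G.FR x).1) (0, ξ) with hAR1
    set AR2 := pd1 (fun x => (G.FR x).2) (0, ξ) with hAR2
    set U1 := pd2 (fun x => (G.FL x).1) (0, ξ) with hU1
    set U2 := pd2 (fun x => (G.FL x).2) (0, ξ) with hU2
    -- the second partials of the two patches agree along the interface
    have hV1 : pd2 (fun x => (G.FR x).1) (0, ξ) = U1 := by
      rw [hU1, pd2, pd2]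
      exact derivWithin_congr (fun s hs => by rw [G.hIface s hs]) (by rw [G.hIface ξ hξ])
    have hV2 : pd2 (fun x => (G.FR x).2) (0, ξ) = U2 := by
      rw [hU2, pd2, pd2]
      exact derivWithin_congr (fun s hs => by rw [G.hIface s hs]) (by rw [G.hIface ξ hξ])
    -- Jacobian determinants
    have hsL : jacDet G.FL (0, ξ) ≠ 0 := G.hFLjac _ hsq'
    have hsR : jacDet G.FR (0, ξ) ≠ 0 := G.hFRjac _ hsq'
    have hsLdef : jacDet G.FL (0, ξ) = AL1 * U2 - AL2 * U1 := rfl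
    have hsRdef : jacDet G.FR (0, ξ) = AR1 * U2 - AR2 * U1 := by
      rw [jacDet, hV1, hV2, hAR1, hAR2]
    -- the G¹ condition, componentwise
    have hv := G.hG1 ξ hξ
    have h1 := congrArg Prod.fst hv
    have h2 := congrArg Prod.snd hv
    simp only [pd1v, pd2v, Prod.fst_sub, Prod.fst_add, Prod.snd_sub, Prod.snd_add,
      Prod.smul_fst, Prod.smul_snd, smul_eq_mul, Prod.fst_zero, Prod.snd_zero,
      ← hAL1, ← hAL2, ← hAR1, ← hAR2, ← hU1, ← hU2] at h1 h2
    -- the key scalar identity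
    have hkey : G.αR ξ * jacDet G.FL (0, ξ) = G.αL ξ * jacDet G.FR (0, ξ) := by
      rw [hsLdef, hsRdef]
      linear_combination U2 * h1 - U1 * h2
    -- the common gradient
    set D := Bspl (G.p - 1) (G.p - G.r - 1) G.k G.τ i ξ *
      d01 (Bspl G.p (G.p - G.r) G.k G.τ 1) 0 with hD
    set lam := G.αL ξ * D / jacDet G.FL (0, ξ) with hlam
    set w : Fin 2 → ℝ := ![lam * U2, -(lam * U1)] with hw
    have hAw : ((jacMat G.FL (0, ξ)).transpose).mulVec w =
        ![pd1 (fGamma1 G.p G.r G.k G.τ G.αL i) (0, ξ),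
          pd2 (fGamma1 G.p G.r G.k G.τ G.αL i) (0, ξ)] := by
      rw [hpd1, hpd2 _ ξ hξ]
      funext j
      fin_cases j <;>
        simp [jacMat, Matrix.mulVec, dotProduct, Fin.sum_univ_two, hw,
          Matrix.transpose_apply, ← hAL1, ← hAL2, ← hU1, ← hU2]
      · have hmul : AL1 * (lam * U2) + -(AL2 * (lam * U1)) = lam * jacDet G.FL (0, ξ) := by
          rw [hsLdef]; ring
        rw [hmul, hlam, div_mul_cancel₀ _ hsL, hD]
        ring
      · ring
    have hBw : ((jacMat G.FR (0, ξ)).transpose).mulVec w =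
        ![pd1 (fGamma1 G.p G.r G.k G.τ G.αR i) (0, ξ),
          pd2 (fGamma1 G.p G.r G.k G.τ G.αR i) (0, ξ)] := by
      rw [hpd1, hpd2 _ ξ hξ]
      funext j
      fin_cases j <;>
        simp [jacMat, Matrix.mulVec, dotProduct, Fin.sum_univ_two, hw,
          Matrix.transpose_apply, hV1, hV2, ← hAR1, ← hAR2]
      · have hmul : AR1 * (lam * U2) + -(AR2 * (lam * U1)) = lam * jacDet G.FR (0, ξ) := by
          rw [hsRdef]; ring
        rw [hmul, hlam]
        rw [div_mul_eq_mul_div, div_eq_iff hsL, hD]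
        linear_combination (Bspl (G.p - 1) (G.p - G.r - 1) G.k G.τ i ξ *
          d01 (Bspl G.p (G.p - G.r) G.k G.τ 1) 0) * hkey.symm
      · ring
    have hdetL : IsUnit ((jacMat G.FL (0, ξ)).transpose).det := by
      rw [Matrix.det_transpose]
      apply isUnit_iff_ne_zero.mpr
      rw [jacMat, Matrix.det_fin_two_of]
      rw [hsLdef] at hsL
      intro h
      exact hsL (by rw [← h, ← hAL1, ← hAL2, ← hU1, ← hU2]; ring)
    have hdetR : IsUnit ((jacMat G.FR (0, ξ)).transpose).det := by
      rw [Matrix.det_transpose]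
      apply isUnit_iff_ne_zero.mpr
      rw [jacMat, Matrix.det_fin_two_of]
      rw [hsRdef] at hsR
      intro h
      exact hsR (by rw [← h, ← hAR1, ← hAR2, hV1, hV2]; ring)
    rw [← hAw, ← hBw, Matrix.mulVec_mulVec, Matrix.mulVec_mulVec,
      Matrix.nonsing_inv_mul _ hdetL, Matrix.nonsing_inv_mul _ hdetR]

end TwoPatch
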